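/- Let t be an invertible element of a commutative ℚ-algebra and let N be a formal power series with constant term 1 satisfying N = 1 + (t-1)xN + xN². Define f = (N - 1)/(tx) (the series with f·tx = N - 1, which exists since N-1 has zero constant term). Then f = (1 + xf)(1 + txf), and consequently (1 - (1+t)x)/(1 - (1+t)x - x²tf) = (1 - (1+t)x)·f. -/

import Mathlib

open PowerSeries

lemma X_mul_cancel' {A : Type*} [CommRing A] {a b : PowerSeries A}
    (h : X * a = X * b) : a = b := by
  ext n
  have := congrArg (coeff (n + 1)) h
  simpa [coeff_succ_X_mul] using this

theorem stmt9 (A : Type*) [CommRing A] [Algebra ℚ A] (t : A) (ht : IsUnit t)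
    (N : PowerSeries A) (hN0 : constantCoeff N = 1)
    (hN : N = 1 + (C t - 1) * X * N + X * N ^ 2)
    (f : PowerSeries A) (hf : f * (C t * X) = N - 1) :
    f = (1 + X * f) * (1 + C t * X * f) ∧
      IsUnit (1 - (1 + C t) * X - X ^ 2 * C t * f) ∧
      (1 - (1 + C t) * X - X ^ 2 * C t * f) * ((1 - (1 + C t) * X) * f) =
        1 - (1 + C t) * X := by
  have htC : IsUnit (C t) := ht.map C
  have key : C t * (X * f) = C t * (X * ((1 + X * f) * (1 + C t * X * f))) := by
    linear_combination (1 - X - C t * X - X * (C t * X * f + N - 1)) * hf + hN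
  have h1 : f = (1 + X * f) * (1 + C t * X * f) :=
    X_mul_cancel' (htC.mul_left_cancel key)
  refine ⟨h1, ?_, by linear_combination (1 - (1 + C t) * X) * h1⟩
  rw [isUnit_iff_constantCoeff]
  simp
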